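/- Let Q be a countable linear order with no least and no greatest element, let I be a nonempty set, and let c : Q → I be a coloring such that for all q < q' in Q and every i ∈ I there exists r with q < r < q' and c r = i. Let (Y i)_{i ∈ I} be a family of linear orders that are pairwise lower isomorphic (including each lower isomorphic to itself). Then the lexicographic sum Σₗ (q : Q), Y (c q) — the sigma type Σ q, Y (c q) with the lexicographic order — is lower 1-transitive. (This is the order denoted ℚ_n(Y₀, …, Y_{n−1}) in the paper.) -/

import Mathlib

/-- A linear order is lower 1-transitive if any two of its initial segments
are order-isomorphic. -/
def LowerOneTransitive (X : Type*) [LinearOrder X] : Prop :=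
  ∀ a b : X, Nonempty (Set.Iic a ≃o Set.Iic b)

/-- Two linear orders are lower isomorphic if any two initial segments
(one from each) are order-isomorphic. -/
def LowerIsomorphic (X Y : Type*) [LinearOrder X] [LinearOrder Y] : Prop :=
  ∀ (a : X) (b : Y), Nonempty (Set.Iic a ≃o Set.Iic b)

noncomputable section
namespace ColoredBF

variable {α β I : Type*} [LinearOrder α] [LinearOrder β]

/-- A colouring is densely distributed. -/
def DenseColor (c : α → I) : Prop :=
  (∀ x y : α, x < y → ∀ i, ∃ z, x < z ∧ z < y ∧ c z = i) ∧
  (∀ x : α, ∀ i, ∃ z, z < x ∧ c z = i) ∧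
  (∀ x : α, ∀ i, ∃ z, x < z ∧ c z = i) ∧
  (∀ i, ∃ z : α, c z = i)

theorem exists_between_finsets {c : β → I} (hc : DenseColor c) (lo hi : Finset β)
    (lo_lt_hi : ∀ x ∈ lo, ∀ y ∈ hi, x < y) (i : I) :
    ∃ m : β, c m = i ∧ (∀ x ∈ lo, x < m) ∧ ∀ y ∈ hi, m < y := by
  obtain ⟨h1, h2, h3, h4⟩ := hc
  by_cases nlo : lo.Nonempty
  · by_cases nhi : hi.Nonempty
    · obtain ⟨m, hm1, hm2, hm3⟩ :=
        h1 _ _ (lo_lt_hi _ (Finset.max'_mem _ nlo) _ (Finset.min'_mem _ nhi)) i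
      exact ⟨m, hm3, fun x hx => lt_of_le_of_lt (Finset.le_max' lo x hx) hm1,
        fun y hy => lt_of_lt_of_le hm2 (Finset.min'_le hi y hy)⟩
    · obtain ⟨m, hm1, hm2⟩ := h3 (Finset.max' lo nlo) i
      exact ⟨m, hm2, fun x hx => lt_of_le_of_lt (Finset.le_max' lo x hx) hm1,
        fun y hy => absurd ⟨y, hy⟩ nhi⟩
  · by_cases nhi : hi.Nonempty
    · obtain ⟨m, hm1, hm2⟩ := h2 (Finset.min' hi nhi) i
      exact ⟨m, hm2, fun x hx => absurd ⟨x, hx⟩ nlo,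
        fun y hy => lt_of_lt_of_le hm1 (Finset.min'_le hi y hy)⟩
    · obtain ⟨m, hm⟩ := h4 i
      exact ⟨m, hm, fun x hx => absurd ⟨x, hx⟩ nlo, fun y hy => absurd ⟨y, hy⟩ nhi⟩

variable (cA : α → I) (cB : β → I)

/-- Colour-preserving partial isomorphisms. -/
def PIso : Type _ :=
  { f : Finset (α × β) // (∀ p ∈ f, cB (Prod.snd p) = cA (Prod.fst p)) ∧
      ∀ p ∈ f, ∀ q ∈ f, cmp (Prod.fst p) (Prod.fst q) = cmp (Prod.snd p) (Prod.snd q) }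

instance : Inhabited (PIso cA cB) :=
  ⟨⟨∅, fun _ h => absurd h (Finset.notMem_empty _),
    fun _ h => absurd h (Finset.notMem_empty _)⟩⟩

instance : Preorder (PIso cA cB) := Subtype.preorder _

variable {cA cB}

theorem exists_across (hcB : DenseColor cB) (f : PIso cA cB) (a : α) :
    ∃ b : β, cB b = cA a ∧ ∀ p ∈ f.val, cmp (Prod.fst p) a = cmp (Prod.snd p) b := by
  by_cases h : ∃ b, (a, b) ∈ f.val
  · obtain ⟨b, hb⟩ := h
    exact ⟨b, f.prop.1 _ hb, fun p hp => f.prop.2 _ hp _ hb⟩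
  have key : ∀ x ∈ (f.val.filter fun p : α × β => p.1 < a).image Prod.snd,
      ∀ y ∈ (f.val.filter fun p : α × β => a < p.1).image Prod.snd, x < y := by
    intro x hx y hy
    rw [Finset.mem_image] at hx hy
    rcases hx with ⟨p, hp1, rfl⟩
    rcases hy with ⟨q, hq1, rfl⟩
    rw [Finset.mem_filter] at hp1 hq1
    rw [← lt_iff_lt_of_cmp_eq_cmp (f.prop.2 _ hp1.1 _ hq1.1)]
    exact lt_trans hp1.2 hq1.2
  obtain ⟨b, hbc, hb⟩ := exists_between_finsets hcB _ _ key (cA a)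
  refine ⟨b, hbc, ?_⟩
  rintro ⟨p1, p2⟩ hp
  have hne : p1 ≠ a := fun he => h ⟨p2, he ▸ hp⟩
  rcases lt_or_gt_of_ne hne with hl | hr
  · have h2 : p1 < a ∧ p2 < b :=
      ⟨hl, hb.1 _ (Finset.mem_image.mpr ⟨(p1, p2), Finset.mem_filter.mpr ⟨hp, hl⟩, rfl⟩)⟩
    rw [← cmp_eq_lt_iff, ← cmp_eq_lt_iff] at h2
    exact h2.1.trans h2.2.symm
  · have h2 : a < p1 ∧ b < p2 :=
      ⟨hr, hb.2 _ (Finset.mem_image.mpr ⟨(p1, p2), Finset.mem_filter.mpr ⟨hp, hr⟩, rfl⟩)⟩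
    rw [← cmp_eq_gt_iff, ← cmp_eq_gt_iff] at h2
    exact h2.1.trans h2.2.symm

/-- Flip a colour-preserving partial isomorphism. -/
protected def PIso.comm (f : PIso cA cB) : PIso cB cA :=
  ⟨f.val.image (Equiv.prodComm α β), by
    constructor
    · intro p hp
      rw [Finset.mem_image] at hp
      obtain ⟨q, hq, rfl⟩ := hp
      exact (f.prop.1 q hq).symm
    · intro p hp q hq
      rw [Finset.mem_image] at hp hq
      obtain ⟨p', hp', rfl⟩ := hp
      obtain ⟨q', hq', rfl⟩ := hq
      exact (f.prop.2 p' hp' q' hq').symm⟩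

theorem PIso.mem_comm {f : PIso cA cB} {a : α} {b : β} :
    (b, a) ∈ f.comm.val ↔ (a, b) ∈ f.val := by
  constructor
  · intro h
    have h' : (b, a) ∈ f.val.image (Equiv.prodComm α β) := h
    rw [Finset.mem_image] at h'
    obtain ⟨⟨x, y⟩, hxy, h2⟩ := h'
    obtain ⟨rfl, rfl⟩ : y = b ∧ x = a := by
      simpa [Equiv.prodComm, Prod.ext_iff] using h2
    exact hxy
  · intro h
    exact Finset.mem_image.mpr ⟨(a, b), h, rfl⟩

theorem PIso.comm_mono {f g : PIso cA cB} (h : f ≤ g) : f.comm ≤ g.comm :=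
  Finset.image_subset_image h

/-- Partial isos defined at `a : α` are cofinal. -/
def definedAtLeft (hcB : DenseColor cB) (a : α) : Order.Cofinal (PIso cA cB) where
  carrier := {f | ∃ b : β, (a, b) ∈ f.val}
  isCofinal f := by
    obtain ⟨b, hbc, a_b⟩ := exists_across hcB f a
    refine ⟨⟨insert (a, b) f.val, ?_, ?_⟩, ⟨b, Finset.mem_insert_self _ _⟩,
      Finset.subset_insert _ _⟩
    · intro p hp
      rw [Finset.mem_insert] at hp
      rcases hp with rfl | pf
      · exact hbc
      · exact f.prop.1 _ pf
    · intro p hp q hq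
      rw [Finset.mem_insert] at hp hq
      rcases hp with rfl | pf <;> rcases hq with rfl | qf
      · simp only [cmp_self_eq_eq]
      · rw [cmp_eq_cmp_symm]; exact a_b _ qf
      · exact a_b _ pf
      · exact f.prop.2 _ pf _ qf

/-- Partial isos defined at `b : β` are cofinal. -/
def definedAtRight (hcA : DenseColor cA) (b : β) : Order.Cofinal (PIso cA cB) where
  carrier := {f | ∃ a, (a, b) ∈ f.val}
  isCofinal f := by
    rcases (definedAtLeft hcA b).isCofinal f.comm with ⟨f', ⟨a, ha⟩, hl⟩
    refine ⟨f'.comm, ⟨a, PIso.mem_comm.mpr ha⟩, ?_⟩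
    rintro ⟨x, y⟩ hp
    exact PIso.mem_comm.mpr (hl (PIso.mem_comm.mpr hp))

/-- Colour-preserving back-and-forth. -/
theorem iso_colored [Countable α] [Countable β] [Nonempty α]
    (hcA : DenseColor cA) (hcB : DenseColor cB) :
    ∃ e : α ≃o β, ∀ a, cB (e a) = cA a := by
  cases nonempty_encodable α
  cases nonempty_encodable β
  let to_cofinal : α ⊕ β → Order.Cofinal (PIso cA cB) := fun p =>
    Sum.recOn p (definedAtLeft hcB) (definedAtRight hcA)
  let our_ideal : Order.Ideal (PIso cA cB) := Order.idealOfCofinals default to_cofinal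
  have hF : ∀ a : α, ∃ b : β, ∃ f ∈ our_ideal, (a, b) ∈ f.val := by
    intro a
    obtain ⟨f, ⟨b, hb⟩, hf⟩ := Order.cofinal_meets_idealOfCofinals default to_cofinal (Sum.inl a)
    exact ⟨b, f, hf, hb⟩
  have hG : ∀ b : β, ∃ a : α, ∃ f ∈ our_ideal, (a, b) ∈ f.val := by
    intro b
    obtain ⟨f, ⟨a, ha⟩, hf⟩ := Order.cofinal_meets_idealOfCofinals default to_cofinal (Sum.inr b)
    exact ⟨a, f, hf, ha⟩
  choose F hFmem using hF
  choose G hGmem using hG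
  have key : ∀ (a : α) (b : β), cmp a (G b) = cmp (F a) b := by
    intro a b
    obtain ⟨f, hf, ha⟩ := hFmem a
    obtain ⟨g, hg, hb⟩ := hGmem b
    rcases our_ideal.directed _ hf _ hg with ⟨m, _, fm, gm⟩
    exact m.prop.2 (a, _) (fm ha) (_, b) (gm hb)
  refine ⟨OrderIso.ofCmpEqCmp F G key, fun a => ?_⟩
  obtain ⟨f, hf, ha⟩ := hFmem a
  exact f.prop.1 _ ha

/-- Transport an order structure along an equality of indices. -/
def eqOrderIso {I : Type*} (Y : I → Type*) [∀ i, Preorder (Y i)] {i j : I} (h : i = j) :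
    Y i ≃o Y j := h ▸ OrderIso.refl (Y i)

theorem toLex_eqOrderIso {κ : Type*} [LinearOrder κ] (Z : κ → Type*) [∀ k, LinearOrder (Z k)]
    {a b : κ} (h : a = b) (z : Z b) :
    (toLex ⟨a, (eqOrderIso Z h).symm z⟩ : Σₗ k, Z k) = toLex ⟨b, z⟩ := by
  subst h; rfl

/-- Congruence of lexicographic sigma orders. -/
noncomputable def sigmaLexCongr {ι κ : Type*} [LinearOrder ι] [LinearOrder κ]
    {Y : ι → Type*} {Z : κ → Type*} [∀ i, LinearOrder (Y i)] [∀ k, LinearOrder (Z k)]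
    (e : ι ≃o κ) (F : ∀ i, Y i ≃o Z (e i)) : (Σₗ i, Y i) ≃o (Σₗ k, Z k) := by
  apply StrictMono.orderIsoOfSurjective
    (fun x : Σₗ i, Y i => (toLex ⟨e x.1, F x.1 x.2⟩ : Σₗ k, Z k))
  · intro x y hxy
    cases hxy with
    | left a b h => exact Sigma.Lex.left _ _ (e.strictMono h)
    | right a b h => exact Sigma.Lex.right _ _ ((F _).strictMono h)
  · rintro ⟨k, z⟩
    refine ⟨toLex ⟨e.symm k, (F (e.symm k)).symm
      ((eqOrderIso Z (e.apply_symm_apply k)).symm z)⟩, ?_⟩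
    have h1 : F (e.symm k) ((F (e.symm k)).symm ((eqOrderIso Z (e.apply_symm_apply k)).symm z))
        = (eqOrderIso Z (e.apply_symm_apply k)).symm z := OrderIso.apply_symm_apply _ _
    show (toLex ⟨e (e.symm k), F (e.symm k) ((F (e.symm k)).symm
      ((eqOrderIso Z (e.apply_symm_apply k)).symm z))⟩ : Σₗ k, Z k) = toLex ⟨k, z⟩
    rw [h1]
    exact toLex_eqOrderIso Z (e.apply_symm_apply k) z

/-- Decomposition of an initial segment of a lexicographic sigma order. -/
noncomputable def iicLexSigma {Q : Type*} [LinearOrder Q] (Z : Q → Type*)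
    [∀ q, LinearOrder (Z q)] (q0 : Q) (y0 : Z q0) :
    ((Σₗ r : Set.Iio q0, Z r.1) ⊕ₗ Set.Iic y0) ≃o Set.Iic (toLex ⟨q0, y0⟩ : Σₗ q, Z q) := by
  apply StrictMono.orderIsoOfSurjective
    (fun x : (Σₗ r : Set.Iio q0, Z r.1) ⊕ₗ Set.Iic y0 =>
      Sum.elim
        (fun s : Σₗ r : Set.Iio q0, Z r.1 =>
          (⟨toLex ⟨s.1.1, s.2⟩, Sigma.Lex.le_def.mpr (Or.inl s.1.2)⟩ :
            Set.Iic (toLex ⟨q0, y0⟩ : Σₗ q, Z q)))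
        (fun y : Set.Iic y0 =>
          (⟨toLex ⟨q0, y.1⟩, Sigma.Lex.le_def.mpr (Or.inr ⟨rfl, y.2⟩)⟩ :
            Set.Iic (toLex ⟨q0, y0⟩ : Σₗ q, Z q)))
        (ofLex x))
  · intro x y hxy
    cases hxy with
    | inl h =>
      refine Subtype.mk_lt_mk.mpr ?_
      cases h with
      | left a b hij => exact Sigma.Lex.left _ _ hij
      | right a b hab => exact Sigma.Lex.right _ _ hab
    | inr h => exact Subtype.mk_lt_mk.mpr (Sigma.Lex.right _ _ h)
    | sep a b => exact Subtype.mk_lt_mk.mpr (Sigma.Lex.left _ _ a.1.2)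
  · rintro ⟨⟨q, z⟩, hq⟩
    have hq' : Sigma.Lex (· < ·) (fun _ => (· ≤ ·)) ⟨q, z⟩ ⟨q0, y0⟩ := hq
    cases hq' with
    | left a b h => exact ⟨toLex (Sum.inl (toLex ⟨⟨q, h⟩, z⟩)), rfl⟩
    | right a b h => exact ⟨toLex (Sum.inr ⟨z, h⟩), rfl⟩

/-- Congruence of lexicographic sums. -/
noncomputable def sumLexCongrIso {A B C D : Type*} [LinearOrder A] [LinearOrder B]
    [LinearOrder C] [LinearOrder D] (e1 : A ≃o B) (e2 : C ≃o D) : (A ⊕ₗ C) ≃o (B ⊕ₗ D) := by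
  apply StrictMono.orderIsoOfSurjective
    (fun x : A ⊕ₗ C => (toLex (Sum.map e1 e2 (ofLex x)) : B ⊕ₗ D))
  · intro x y hxy
    cases hxy with
    | inl h => exact Sum.Lex.inl (e1.strictMono h)
    | inr h => exact Sum.Lex.inr (e2.strictMono h)
    | sep a b => exact Sum.Lex.sep _ _
  · rintro (b | d)
    · exact ⟨toLex (Sum.inl (e1.symm b)), congrArg (fun w => toLex (Sum.inl w)) (e1.apply_symm_apply b)⟩
    · exact ⟨toLex (Sum.inr (e2.symm d)), congrArg (fun w => toLex (Sum.inr w)) (e2.apply_symm_apply d)⟩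

/-- The restriction of a dense colouring to a proper initial open interval is
a dense colouring of the interval. -/
theorem denseColor_Iio {Q : Type*} [LinearOrder Q] [NoMinOrder Q]
    {I : Type*} (c : Q → I)
    (hc : ∀ q q' : Q, q < q' → ∀ i : I, ∃ r : Q, q < r ∧ r < q' ∧ c r = i) (q0 : Q) :
    DenseColor (fun r : Set.Iio q0 => c r.1) := by
  refine ⟨?_, ?_, ?_, ?_⟩
  · intro x y hxy i
    obtain ⟨z, hz1, hz2, hz3⟩ := hc x.1 y.1 hxy i
    exact ⟨⟨z, lt_trans hz2 y.2⟩, hz1, hz2, hz3⟩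
  · intro x i
    obtain ⟨x', hx'⟩ := exists_lt x.1
    obtain ⟨z, hz1, hz2, hz3⟩ := hc x' x.1 hx' i
    exact ⟨⟨z, lt_trans hz2 x.2⟩, hz2, hz3⟩
  · intro x i
    obtain ⟨z, hz1, hz2, hz3⟩ := hc x.1 q0 x.2 i
    exact ⟨⟨z, hz2⟩, hz1, hz3⟩
  · intro i
    obtain ⟨x', hx'⟩ := exists_lt q0
    obtain ⟨z, hz1, hz2, hz3⟩ := hc x' q0 hx' i
    exact ⟨⟨z, hz2⟩, hz3⟩

end ColoredBF

open ColoredBF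

/-- If `Q` is a countable dense-coloured linear order without endpoints with colours
in `I`, and `(Y i)` is a family of pairwise lower isomorphic linear orders, then the
lexicographic sum `Σₗ (q : Q), Y (c q)` (the order ℚ_n(Y₀, …) of the paper) is
lower 1-transitive. -/
theorem lowerOneTransitive_ratMixture
    {Q : Type*} [LinearOrder Q] [Countable Q] [NoMinOrder Q] [NoMaxOrder Q]
    {I : Type*} [Nonempty I] (c : Q → I)
    (hc : ∀ q q' : Q, q < q' → ∀ i : I, ∃ r : Q, q < r ∧ r < q' ∧ c r = i)
    (Y : I → Type*) [∀ i, LinearOrder (Y i)]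
    (hY : ∀ i j : I, LowerIsomorphic (Y i) (Y j)) :
    LowerOneTransitive (Σₗ (q : Q), Y (c q)) := by
  intro a b
  obtain ⟨qa, ya⟩ := a
  obtain ⟨qb, yb⟩ := b
  haveI : Nonempty (Set.Iio qa) := (Set.nonempty_Iio).to_subtype
  obtain ⟨e, he⟩ := iso_colored (cA := fun r : Set.Iio qa => c r.1)
    (cB := fun r : Set.Iio qb => c r.1) (denseColor_Iio c hc qa) (denseColor_Iio c hc qb)
  have F : ∀ r : Set.Iio qa, Y (c r.1) ≃o Y (c (e r).1) := fun r => eqOrderIso Y (he r).symm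
  have middle : (Σₗ r : Set.Iio qa, Y (c r.1)) ≃o (Σₗ r : Set.Iio qb, Y (c r.1)) :=
    sigmaLexCongr e F
  have g : Set.Iic ya ≃o Set.Iic yb := (hY (c qa) (c qb) ya yb).some
  exact ⟨((iicLexSigma (fun q => Y (c q)) qa ya).symm.trans
    ((sumLexCongrIso middle g).trans (iicLexSigma (fun q => Y (c q)) qb yb)))⟩

end
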